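/- arXiv:1001.4283 — 2 statements merged into one kernel-verified Lean document; each statement's English description precedes it below -/
import Mathlib

section
/- The map Φ^C: Q_n → P^C_{2n} is monotone with respect to the interleaved dominance order on bipartitions and the dominance order on partitions: if (ρ;σ) ≤ (μ;ν) in Q_n, then Φ^C(ρ;σ) ≤ Φ^C(μ;ν) in dominance order. -/
open Finset

/-- Partial sum of the first `k` terms of a sequence of naturals. -/
def psum (π : ℕ → ℕ) (k : ℕ) : ℕ := ∑ i ∈ Finset.range k, π i

/-- A composition of `n`: almost all terms zero, summing to `n`. -/
def IsComposition (n : ℕ) (π : ℕ → ℕ) : Prop :=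
  ∃ N, (∀ i, N ≤ i → π i = 0) ∧ psum π N = n

/-- Dominance order: `l` dominates `π`. -/
def Dominates (l π : ℕ → ℕ) : Prop := ∀ k, psum π k ≤ psum l k

/-- A partition: weakly decreasing sequence. -/
def IsPartition (π : ℕ → ℕ) : Prop := ∀ i, π (i + 1) ≤ π i

/-- A quasi-partition: `π i ≥ π (i+2)` for all `i`. -/
def IsQuasiPartition (π : ℕ → ℕ) : Prop := ∀ i, π (i + 2) ≤ π i

/-- Interleaving of two sequences: `(ρ₁, σ₁, ρ₂, σ₂, …)` (0-indexed). -/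
def interleave (ρ σ : ℕ → ℕ) (i : ℕ) : ℕ :=
  if i % 2 = 0 then ρ (i / 2) else σ (i / 2)

/-- A bipartition of `n`: a pair of partitions whose interleaving sums to `n`. -/
def IsBipartition (n : ℕ) (ρ σ : ℕ → ℕ) : Prop :=
  IsPartition ρ ∧ IsPartition σ ∧ IsComposition n (interleave ρ σ)

/-- Interleaved dominance order on bipartitions: `(ρ;σ) ≤ (μ;ν)`. -/
def BiLE (ρ σ μ ν : ℕ → ℕ) : Prop :=
  Dominates (interleave μ ν) (interleave ρ σ)

/-- The map `Φ^C` on sequences: replace a consecutive pair `2s < 2t`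
by `s+t, s+t` (pointwise description; replacements never overlap for
quasi-partitions). -/
def phiC (π : ℕ → ℕ) : ℕ → ℕ
  | 0 => if π 0 < π 1 then (π 0 + π 1) / 2 else π 0
  | (j + 1) =>
      if π (j + 1) < π (j + 2) then (π (j + 1) + π (j + 2)) / 2
      else if π j < π (j + 1) then (π j + π (j + 1)) / 2
      else π (j + 1)

/-- `Φ^C` of a bipartition: apply `phiC` to the doubled interleaving. -/
def PhiC (ρ σ : ℕ → ℕ) : ℕ → ℕ := phiC (fun i => 2 * interleave ρ σ i)

/-- Membership in `P^C_{2n}`: partition of `2n` with every odd part of even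
multiplicity. -/
def IsPC (n : ℕ) (l : ℕ → ℕ) : Prop :=
  IsPartition l ∧ IsComposition (2 * n) l ∧
    ∀ a : ℕ, Odd a → Even ({i | l i = a}.ncard)

/-- C-distinguished: `μ i ≥ ν i - 1` and `ν i ≥ μ (i+1) - 1`. -/
def QC (μ ν : ℕ → ℕ) : Prop :=
  ∀ i, ν i ≤ μ i + 1 ∧ μ (i + 1) ≤ ν i + 1

/-- B-distinguished: `μ i ≥ ν i - 2` and `ν i ≥ μ (i+1)`. -/
def QB (μ ν : ℕ → ℕ) : Prop :=
  ∀ i, ν i ≤ μ i + 2 ∧ μ (i + 1) ≤ ν i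

/-- Special: `μ i ≥ ν i - 1` and `ν i ≥ μ (i+1)`. -/
def QS (μ ν : ℕ → ℕ) : Prop :=
  ∀ i, ν i ≤ μ i + 1 ∧ μ (i + 1) ≤ ν i

/-- The condition defining `Q_n^{B,2}`: `μ i ≥ ν i - 2`. -/
def QB2 (μ ν : ℕ → ℕ) : Prop := ∀ i, ν i ≤ μ i + 2

/-- For an antitone sequence, the starting index of the run of equal values
containing index `i`. -/
noncomputable def runStart (l : ℕ → ℕ) (i : ℕ) : ℕ := {j | l i < l j}.ncard

/-- The map `Φ̂^C`, pointwise: halve even parts; replace an (even-length)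
maximal run of an odd part `2k+1` with `k, k+1, k, k+1, …`. -/
noncomputable def hphiC (l : ℕ → ℕ) (i : ℕ) : ℕ :=
  if Even (l i) then l i / 2
  else if Even (i - runStart l i) then l i / 2 else l i / 2 + 1

/-- Partial sums of an integer sequence. -/
def zsum (π : ℕ → ℤ) (k : ℕ) : ℤ := ∑ i ∈ Finset.range k, π i

/-- Dominance order on integer sequences. -/
def ZDominates (l π : ℕ → ℤ) : Prop := ∀ k, zsum π k ≤ zsum l k

/-- The interleaved integer sequence `(2ρ₁+1, 2σ₁−1, 2ρ₂+1, 2σ₂−1, …)`. -/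
def interB (ρ σ : ℕ → ℕ) (i : ℕ) : ℤ :=
  if i % 2 = 0 then 2 * (ρ (i / 2) : ℤ) + 1 else 2 * (σ (i / 2) : ℤ) - 1

/-- The map `Φ^B` on integer sequences: replace a consecutive pair `s < t`
by `(s+t)/2, (s+t)/2` (pointwise description). -/
def phiB (π : ℕ → ℤ) : ℕ → ℤ
  | 0 => if π 0 < π 1 then (π 0 + π 1) / 2 else π 0
  | (j + 1) =>
      if π (j + 1) < π (j + 2) then (π (j + 1) + π (j + 2)) / 2
      else if π j < π (j + 1) then (π j + π (j + 1)) / 2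
      else π (j + 1)

/-- `Φ^B` of a bipartition. -/
def PhiB (ρ σ : ℕ → ℕ) : ℕ → ℤ := phiB (interB ρ σ)

/-- Membership in `P^B_{2n+1}` for an integer sequence: nonnegative, weakly
decreasing, summing to `2n+1`, with every (positive) even part of even
multiplicity. -/
def IsPB (n : ℕ) (l : ℕ → ℤ) : Prop :=
  (∀ i, 0 ≤ l i) ∧ (∀ i, l (i + 1) ≤ l i) ∧
  (∃ N, (∀ i, N ≤ i → l i = 0) ∧ zsum l N = 2 * n + 1) ∧
  ∀ a : ℤ, 0 < a → Even a → Even ({i | l i = a}.ncard)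

/-- Membership in `P^B_{2n+1}` for a natural-number partition. -/
def IsPBN (n : ℕ) (l : ℕ → ℕ) : Prop :=
  IsPartition l ∧ IsComposition (2 * n + 1) l ∧
    ∀ a : ℕ, 0 < a → Even a → Even ({i | l i = a}.ncard)

/-- The map `Φ̂^B`, pointwise (0-indexed, so the paper's index `i` is `j+1`):
an odd part `λ_i` becomes `(λ_i + (−1)^i)/2`; a maximal run of an even part
`2k` starting at (0-indexed) position `s` becomes `k, k, …` if `s` is odd
(paper's `i` even) and `k−1, k+1, k−1, k+1, …` if `s` is even (paper's `i`
odd). -/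
noncomputable def hphiB (l : ℕ → ℕ) (j : ℕ) : ℕ :=
  if Odd (l j) then (if Even j then (l j - 1) / 2 else (l j + 1) / 2)
  else
    if Odd (runStart l j) then l j / 2
    else if Even (j - runStart l j) then l j / 2 - 1 else l j / 2 + 1

/-- First component of the special closure `(ρ;σ)°`. -/
def scRho (ρ σ : ℕ → ℕ) : ℕ → ℕ
  | 0 => if ρ 0 + 1 < σ 0 then (ρ 0 + σ 0) / 2 else ρ 0
  | (i + 1) =>
      if ρ (i + 1) + 1 < σ (i + 1) then (ρ (i + 1) + σ (i + 1)) / 2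
      else if σ i < ρ (i + 1) then (σ i + ρ (i + 1)) / 2
      else ρ (i + 1)

/-- Second component of the special closure `(ρ;σ)°`. -/
def scSigma (ρ σ : ℕ → ℕ) (i : ℕ) : ℕ :=
  if ρ i + 1 < σ i then (ρ i + σ i + 1) / 2
  else if σ i < ρ (i + 1) then (σ i + ρ (i + 1) + 1) / 2
  else σ i

/-- First component of the closure `(ρ;σ)~` into `Q_n^{B,2}`. -/
def tRho (ρ σ : ℕ → ℕ) (i : ℕ) : ℕ :=
  if ρ i + 2 < σ i then (ρ i + σ i + 1) / 2 - 1 else ρ i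

/-- Second component of the closure `(ρ;σ)~` into `Q_n^{B,2}`. -/
def tSigma (ρ σ : ℕ → ℕ) (i : ℕ) : ℕ :=
  if ρ i + 2 < σ i then (ρ i + σ i) / 2 + 1 else σ i

/-- First component of the closure `(ρ;σ)^B` into `Q_n^B`. -/
def bRho (ρ σ : ℕ → ℕ) : ℕ → ℕ
  | 0 => if ρ 0 + 2 < σ 0 then (ρ 0 + σ 0 + 1) / 2 - 1 else ρ 0
  | (i + 1) =>
      if ρ (i + 1) + 2 < σ (i + 1) then (ρ (i + 1) + σ (i + 1) + 1) / 2 - 1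
      else if σ i < ρ (i + 1) then (σ i + ρ (i + 1)) / 2
      else ρ (i + 1)

/-- Second component of the closure `(ρ;σ)^B` into `Q_n^B`. -/
def bSigma (ρ σ : ℕ → ℕ) (i : ℕ) : ℕ :=
  if ρ i + 2 < σ i then (ρ i + σ i) / 2 + 1
  else if σ i < ρ (i + 1) then (σ i + ρ (i + 1) + 1) / 2
  else σ i

/-- First component of the closure `(ρ;σ)^C` into `Q_n^C`. -/
def cRho (ρ σ : ℕ → ℕ) : ℕ → ℕ
  | 0 => if ρ 0 + 1 < σ 0 then (ρ 0 + σ 0) / 2 else ρ 0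
  | (i + 1) =>
      if ρ (i + 1) + 1 < σ (i + 1) then (ρ (i + 1) + σ (i + 1)) / 2
      else if σ i + 1 < ρ (i + 1) then (σ i + ρ (i + 1) + 1) / 2
      else ρ (i + 1)

/-- Second component of the closure `(ρ;σ)^C` into `Q_n^C`. -/
def cSigma (ρ σ : ℕ → ℕ) (i : ℕ) : ℕ :=
  if ρ i + 1 < σ i then (ρ i + σ i + 1) / 2
  else if σ i + 1 < ρ (i + 1) then (σ i + ρ (i + 1)) / 2
  else σ i
lemma psum_succ' (π : ℕ → ℕ) (k : ℕ) : psum π (k+1) = psum π k + π k :=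
  Finset.sum_range_succ π k

lemma psum_phiC (π : ℕ → ℕ) (hq : ∀ i, π (i+2) ≤ π i) (hev : ∀ i, 2 ∣ π i) :
    ∀ k, psum (phiC π) (k+1) =
      if π k < π (k+1) then (psum π k + psum π (k+2)) / 2 else psum π (k+1) := by
  intro k
  induction k with
  | zero =>
      show psum (phiC π) 1 = if π 0 < π 1 then (psum π 0 + psum π 2) / 2 else psum π 1
      have h1 : psum (phiC π) 1 = phiC π 0 := by simp [psum]
      have h0 : phiC π 0 = if π 0 < π 1 then (π 0 + π 1) / 2 else π 0 := rfl
      have e0 : psum π 0 = 0 := rfl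
      have e1 : psum π 1 = psum π 0 + π 0 := psum_succ' π 0
      have e2 : psum π 2 = psum π 1 + π 1 := psum_succ' π 1
      have := hev 0; have := hev 1
      rw [h1, h0]
      split_ifs <;> omega
  | succ k ih =>
      show psum (phiC π) (k+2) =
        if π (k+1) < π (k+2) then (psum π (k+1) + psum π (k+3)) / 2 else psum π (k+2)
      have hstep : psum (phiC π) (k+2) = psum (phiC π) (k+1) + phiC π (k+1) :=
        psum_succ' (phiC π) (k+1)
      have hval : phiC π (k+1) =
          if π (k+1) < π (k+2) then (π (k+1) + π (k+2)) / 2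
          else if π k < π (k+1) then (π k + π (k+1)) / 2
          else π (k+1) := rfl
      have hq0 := hq k
      have e1 : psum π (k+1) = psum π k + π k := psum_succ' π k
      have e2 : psum π (k+2) = psum π (k+1) + π (k+1) := psum_succ' π (k+1)
      have e3 : psum π (k+3) = psum π (k+2) + π (k+2) := psum_succ' π (k+2)
      have := hev k; have := hev (k+1); have := hev (k+2)
      have hevs : 2 ∣ psum π k := by
        clear * - hev
        induction k with
        | zero => simp [psum]
        | succ k ih => rw [psum_succ']; exact Nat.dvd_add ih (hev k)
      rw [hstep, hval, ih]
      split_ifs <;> omega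

/-- `Φ^C` is monotone from interleaved dominance order on
bipartitions to dominance order on partitions. -/
theorem phiC_monotone (n : ℕ) (ρ σ μ ν : ℕ → ℕ)
    (h1 : IsBipartition n ρ σ) (h2 : IsBipartition n μ ν)
    (hle : BiLE ρ σ μ ν) :
    Dominates (PhiC μ ν) (PhiC ρ σ) := by
  intro k
  set f : ℕ → ℕ := fun i => 2 * interleave ρ σ i with hf
  set g : ℕ → ℕ := fun i => 2 * interleave μ ν i with hg
  have hqf : ∀ i, f (i+2) ≤ f i := by
    intro i
    have hm : (i+2) % 2 = i % 2 := by omega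
    have hd : (i+2) / 2 = i / 2 + 1 := by omega
    simp only [hf, interleave, hm, hd]
    split
    · exact Nat.mul_le_mul_left 2 (h1.1 (i/2))
    · exact Nat.mul_le_mul_left 2 (h1.2.1 (i/2))
  have hqg : ∀ i, g (i+2) ≤ g i := by
    intro i
    have hm : (i+2) % 2 = i % 2 := by omega
    have hd : (i+2) / 2 = i / 2 + 1 := by omega
    simp only [hg, interleave, hm, hd]
    split
    · exact Nat.mul_le_mul_left 2 (h2.1 (i/2))
    · exact Nat.mul_le_mul_left 2 (h2.2.1 (i/2))
  have hevf : ∀ i, 2 ∣ f i := fun i => ⟨_, rfl⟩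
  have hevg : ∀ i, 2 ∣ g i := fun i => ⟨_, rfl⟩
  have hdom : ∀ j, psum f j ≤ psum g j := by
    intro j
    have := hle j
    simp only [hf, hg, psum, ← Finset.mul_sum]
    exact Nat.mul_le_mul_left 2 this
  have hevp : ∀ j, 2 ∣ psum f j ∧ 2 ∣ psum g j := by
    intro j
    induction j with
    | zero => simp [psum]
    | succ j ih =>
        rw [psum_succ', psum_succ']
        exact ⟨Nat.dvd_add ih.1 (hevf j), Nat.dvd_add ih.2 (hevg j)⟩
  cases k with
  | zero => simp [psum]
  | succ k =>
      have hF := psum_phiC f hqf hevf k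
      have hG := psum_phiC g hqg hevg k
      have hPF : PhiC ρ σ = phiC f := rfl
      have hPG : PhiC μ ν = phiC g := rfl
      rw [hPF, hPG, hF, hG]
      have d1 := hdom k
      have d2 := hdom (k+1)
      have d3 := hdom (k+2)
      have ef1 : psum f (k+1) = psum f k + f k := psum_succ' f k
      have ef2 : psum f (k+2) = psum f (k+1) + f (k+1) := psum_succ' f (k+1)
      have eg1 : psum g (k+1) = psum g k + g k := psum_succ' g k
      have eg2 : psum g (k+2) = psum g (k+1) + g (k+1) := psum_succ' g (k+1)
      have p1 := hevp k
      have p2 := hevp (k+1)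
      have p3 := hevp (k+2)
      split_ifs <;> omega
end

section
/- For any λ ∈ P^C_{2n}, one has Φ^C(Φ̂^C(λ)) = λ; that is, Φ^C is a left inverse of Φ̂^C. -/
open Finset

section PCAuxLemmas

variable {l : ℕ → ℕ}

private lemma pc_anti (hl : IsPartition l) : ∀ {i j : ℕ}, i ≤ j → l j ≤ l i :=
  fun h => antitone_nat_of_succ_le hl h

/-- Characterization of `runStart` for antitone, finitely supported `l`. -/
private lemma runStart_eq (hl : IsPartition l) {N : ℕ} (hN : ∀ i, N ≤ i → l i = 0)
    (i : ℕ) : runStart l i = sInf {j | l j ≤ l i} := by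
  have hne : {j | l j ≤ l i}.Nonempty := ⟨N, by simp [hN N le_rfl]⟩
  set m := sInf {j | l j ≤ l i} with hm
  have hmem : l m ≤ l i := Nat.sInf_mem hne
  have hSet : {j | l i < l j} = Set.Iio m := by
    ext j
    simp only [Set.mem_setOf_eq, Set.mem_Iio]
    constructor
    · intro hj
      by_contra hc
      push_neg at hc
      have := pc_anti hl hc
      omega
    · intro hj
      have : j ∉ {j | l j ≤ l i} := Nat.notMem_of_lt_sInf hj
      simp only [Set.mem_setOf_eq, not_le] at this
      exact this
  rw [runStart, hSet, ← Finset.coe_range, Set.ncard_coe_finset, Finset.card_range]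

private lemma runStart_le (hl : IsPartition l) {N : ℕ} (hN : ∀ i, N ≤ i → l i = 0)
    (i : ℕ) : runStart l i ≤ i := by
  rw [runStart_eq hl hN]
  exact Nat.sInf_le (by simp)

private lemma runStart_val (hl : IsPartition l) {N : ℕ} (hN : ∀ i, N ≤ i → l i = 0)
    (i : ℕ) : l (runStart l i) = l i := by
  have h1 := runStart_le hl hN i
  have h2 : l (runStart l i) ≤ l i := by
    rw [runStart_eq hl hN]
    exact Nat.sInf_mem (⟨N, by simp [hN N le_rfl]⟩ : {j | l j ≤ l i}.Nonempty)
  have h3 := pc_anti hl h1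
  omega

private lemma run_const (hl : IsPartition l) {N : ℕ} (hN : ∀ i, N ≤ i → l i = 0)
    {i j : ℕ} (h1 : runStart l i ≤ j) (h2 : j ≤ i) : l j = l i := by
  have := pc_anti hl h1
  have := pc_anti hl h2
  have := runStart_val hl hN i
  omega

private lemma runStart_congr {i j : ℕ} (h : l j = l i) :
    runStart l j = runStart l i := by
  unfold runStart
  rw [h]

/-- For odd parts, the maximal run containing `i` is `[s, E)` with `E - s` even. -/
private lemma run_even (hl : IsPartition l) {N : ℕ} (hN : ∀ i, N ≤ i → l i = 0)
    (hodd : ∀ a : ℕ, Odd a → Even ({i | l i = a}.ncard))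
    {i : ℕ} (hoi : ¬ Even (l i)) :
    ∃ E, runStart l i ≤ i ∧ i < E ∧ Even (E - runStart l i) ∧
      ∀ j, runStart l i ≤ j → j < E → l j = l i := by
  have hm2 : l i % 2 = 1 := Nat.not_even_iff.mp hoi
  have hpos : 0 < l i := by omega
  have hne : {j | l j < l i}.Nonempty := by
    refine ⟨N, ?_⟩
    show l N < l i
    rw [hN N le_rfl]
    exact hpos
  refine ⟨sInf {j | l j < l i}, runStart_le hl hN i, ?_, ?_, ?_⟩
  · by_contra hc
    push_neg at hc
    have h1 := pc_anti hl hc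
    have h2 : l (sInf {j | l j < l i}) < l i := Nat.sInf_mem hne
    omega
  · have hsval := runStart_val hl hN i
    have hsi := runStart_le hl hN i
    have hconst : ∀ j, runStart l i ≤ j → j < sInf {j | l j < l i} → l j = l i := by
      intro j hj1 hj2
      have h1 := pc_anti hl hj1
      have h2 : j ∉ {j | l j < l i} := Nat.notMem_of_lt_sInf hj2
      simp only [Set.mem_setOf_eq, not_lt] at h2
      omega
    have hset : {j | l j = l i} = Set.Ico (runStart l i) (sInf {j | l j < l i}) := by
      ext j
      simp only [Set.mem_setOf_eq, Set.mem_Ico]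
      constructor
      · intro hj
        refine ⟨?_, ?_⟩
        · rw [runStart_eq hl hN]
          exact Nat.sInf_le (by simp [hj])
        · by_contra hc
          push_neg at hc
          have h1 := pc_anti hl hc
          have h2 : l (sInf {j | l j < l i}) < l i := Nat.sInf_mem hne
          omega
      · intro ⟨hj1, hj2⟩
        exact hconst j hj1 hj2
    have := hodd (l i) (Nat.odd_iff.mpr (by omega))
    rw [hset, ← Finset.coe_Ico, Set.ncard_coe_finset, Nat.card_Ico] at this
    exact this
  · intro j hj1 hj2
    have hsval := runStart_val hl hN i
    have h1 := pc_anti hl hj1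
    have h2 : j ∉ {j | l j < l i} := Nat.notMem_of_lt_sInf hj2
    simp only [Set.mem_setOf_eq, not_lt] at h2
    omega

/-- "Low" position: odd part, even offset in its run. -/
private lemma hphiC_low (hl : IsPartition l) {N : ℕ} (hN : ∀ i, N ≤ i → l i = 0)
    (hodd : ∀ a : ℕ, Odd a → Even ({i | l i = a}.ncard))
    {i : ℕ} (h1 : ¬ Even (l i)) (h2 : Even (i - runStart l i)) :
    l (i + 1) = l i ∧ hphiC l i = l i / 2 ∧ hphiC l (i + 1) = l i / 2 + 1 := by
  obtain ⟨E, hsi, hiE, hEs, hconst⟩ := run_even hl hN hodd h1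
  have hE2 : i + 1 < E := by
    obtain ⟨a, ha⟩ := hEs
    obtain ⟨b, hb⟩ := h2
    omega
  have hl1 : l (i + 1) = l i := hconst _ (by omega) hE2
  have hrs : runStart l (i + 1) = runStart l i := runStart_congr hl1
  have hoff : ¬ Even (i + 1 - runStart l (i + 1)) := by
    rw [hrs]
    obtain ⟨b, hb⟩ := h2
    rintro ⟨c, hc⟩
    omega
  refine ⟨hl1, ?_, ?_⟩
  · rw [hphiC, if_neg h1, if_pos h2]
  · rw [hphiC, hl1, if_neg h1, if_neg hoff]

/-- Trivial bound on `hphiC`. -/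
private lemma hphiC_ub (l : ℕ → ℕ) (i : ℕ) : hphiC l i ≤ l i / 2 + 1 := by
  unfold hphiC
  split_ifs <;> omega

/-- If `i` is not "low" then `hphiC` does not increase at `i`. -/
private lemma hphiC_notlow (hl : IsPartition l) {N : ℕ} (hN : ∀ i, N ≤ i → l i = 0)
    {i : ℕ} (h : Even (l i) ∨ ¬ Even (i - runStart l i)) :
    hphiC l (i + 1) ≤ hphiC l i := by
  have hle : l (i + 1) ≤ l i := hl i
  have hb := hphiC_ub l (i + 1)
  by_cases he : Even (l i)
  · have hmi : hphiC l i = l i / 2 := by rw [hphiC, if_pos he]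
    by_cases he1 : Even (l (i + 1))
    · have : hphiC l (i + 1) = l (i + 1) / 2 := by rw [hphiC, if_pos he1]
      rw [this, hmi]
      exact Nat.div_le_div_right hle
    · rw [Nat.even_iff] at he
      rw [Nat.even_iff] at he1
      omega
  · have hof : ¬ Even (i - runStart l i) := h.resolve_left he
    have hmi : hphiC l i = l i / 2 + 1 := by rw [hphiC, if_neg he, if_neg hof]
    by_cases heq : l (i + 1) = l i
    · have hrs : runStart l (i + 1) = runStart l i := runStart_congr heq
      have hsile : runStart l i ≤ i := runStart_le hl hN i
      have hoff : Even (i + 1 - runStart l (i + 1)) := by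
        rw [hrs, Nat.even_iff]
        rw [Nat.even_iff] at hof
        omega
      have he1 : ¬ Even (l (i + 1)) := heq ▸ he
      have : hphiC l (i + 1) = l (i + 1) / 2 := by
        rw [hphiC, if_neg he1, if_pos hoff]
      omega
    · rw [Nat.even_iff] at he
      omega

/-- A "high" position `j+1` is preceded by a "low" position `j` in the same run. -/
private lemma hphiC_high_prev (hl : IsPartition l) {N : ℕ} (hN : ∀ i, N ≤ i → l i = 0)
    {j : ℕ} (h1 : ¬ Even (l (j + 1))) (h2 : ¬ Even (j + 1 - runStart l (j + 1))) :
    l j = l (j + 1) ∧ ¬ Even (l j) ∧ Even (j - runStart l j) := by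
  have hsle : runStart l (j + 1) ≤ j + 1 := runStart_le hl hN (j + 1)
  have hsj : runStart l (j + 1) ≤ j := by
    by_contra hc
    have : runStart l (j + 1) = j + 1 := by omega
    rw [this] at h2
    simp at h2
  have hlj : l j = l (j + 1) := run_const hl hN hsj (by omega)
  have hrs : runStart l j = runStart l (j + 1) := runStart_congr hlj
  refine ⟨hlj, hlj ▸ h1, ?_⟩
  rw [hrs, Nat.even_iff]
  rw [Nat.even_iff] at h2
  omega

end PCAuxLemmas

/-- `Φ^C(Φ̂^C(λ)) = λ` for all `λ ∈ P^C_{2n}`. -/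
theorem phiC_hphiC (n : ℕ) (l : ℕ → ℕ) (h : IsPC n l) :
    ∀ i, PhiC (fun j => hphiC l (2 * j)) (fun j => hphiC l (2 * j + 1)) i
      = l i := by
  obtain ⟨hl, ⟨N, hN, -⟩, hodd⟩ := h
  have hint : (fun k => 2 * interleave (fun j => hphiC l (2 * j)) (fun j => hphiC l (2 * j + 1)) k)
      = fun k => 2 * hphiC l k := by
    funext k
    unfold interleave
    split_ifs with hk
    · show 2 * hphiC l (2 * (k / 2)) = 2 * hphiC l k
      have hkk : 2 * (k / 2) = k := by omega
      rw [hkk]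
    · show 2 * hphiC l (2 * (k / 2) + 1) = 2 * hphiC l k
      have hkk : 2 * (k / 2) + 1 = k := by omega
      rw [hkk]
  intro i
  rw [PhiC, hint]
  match i with
  | 0 =>
    have hs0 : runStart l 0 = 0 := Nat.le_zero.mp (runStart_le hl hN 0)
    show (if 2 * hphiC l 0 < 2 * hphiC l 1 then (2 * hphiC l 0 + 2 * hphiC l 1) / 2
      else 2 * hphiC l 0) = l 0
    by_cases he : Even (l 0)
    · have h10 : hphiC l 1 ≤ hphiC l 0 := hphiC_notlow hl hN (i := 0) (Or.inl he)
      have hv : hphiC l 0 = l 0 / 2 := by rw [hphiC, if_pos he]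
      rw [Nat.even_iff] at he
      rw [if_neg (by omega)]
      omega
    · obtain ⟨he1, hv0, hv1'⟩ := hphiC_low hl hN hodd (i := 0) he (by rw [hs0]; exact Even.zero)
      have hv1 : hphiC l 1 = l 0 / 2 + 1 := hv1'
      have hm2 := Nat.not_even_iff.mp he
      rw [if_pos (by omega)]
      omega
  | (j + 1) =>
    show (if 2 * hphiC l (j + 1) < 2 * hphiC l (j + 2) then
        (2 * hphiC l (j + 1) + 2 * hphiC l (j + 2)) / 2
      else if 2 * hphiC l j < 2 * hphiC l (j + 1) then
        (2 * hphiC l j + 2 * hphiC l (j + 1)) / 2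
      else 2 * hphiC l (j + 1)) = l (j + 1)
    by_cases hlow1 : ¬ Even (l (j + 1)) ∧ Even (j + 1 - runStart l (j + 1))
    · obtain ⟨hEq, hv1, hv2'⟩ := hphiC_low hl hN hodd hlow1.1 hlow1.2
      have hv2 : hphiC l (j + 2) = l (j + 1) / 2 + 1 := hv2'
      have hm2 := Nat.not_even_iff.mp hlow1.1
      rw [if_pos (by omega)]
      omega
    · have hOr : Even (l (j + 1)) ∨ ¬ Even (j + 1 - runStart l (j + 1)) := by tauto
      have hc1 : hphiC l (j + 2) ≤ hphiC l (j + 1) := hphiC_notlow hl hN hOr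
      rw [if_neg (by omega)]
      by_cases hlow0 : ¬ Even (l j) ∧ Even (j - runStart l j)
      · obtain ⟨hEq, hv0, hv1⟩ := hphiC_low hl hN hodd hlow0.1 hlow0.2
        have hm2 := Nat.not_even_iff.mp hlow0.1
        rw [if_pos (by omega)]
        omega
      · have hOr0 : Even (l j) ∨ ¬ Even (j - runStart l j) := by tauto
        have hc2 : hphiC l (j + 1) ≤ hphiC l j := hphiC_notlow hl hN hOr0
        rw [if_neg (by omega)]
        have he1 : Even (l (j + 1)) := by
          by_contra hodd1
          rcases hOr with hh | hh
          · exact hodd1 hh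
          · have hp := hphiC_high_prev hl hN hodd1 hh
            exact hlow0 ⟨hp.2.1, hp.2.2⟩
        have hv : hphiC l (j + 1) = l (j + 1) / 2 := by rw [hphiC, if_pos he1]
        rw [Nat.even_iff] at he1
        omega
end
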